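/- A face σ of a simplicial complex Δ is a shedding face if and only if no facet of (star_Δ σ) \ σ is a facet of Δ \ σ. -/

import Mathlib

variable {ι : Type*} [DecidableEq ι]

/-- A clutter: an antichain of finite sets (no circuit properly contains another). -/
def IsClutter (C : Set (Finset ι)) : Prop :=
  ∀ e₁ ∈ C, ∀ e₂ ∈ C, e₁ ⊆ e₂ → e₁ = e₂

/-- The independence complex of the clutter with circuit set `C` on ground set `V`:
faces are the subsets of `V` containing no circuit. -/
def indepOn (V : Finset ι) (C : Set (Finset ι)) : Set (Finset ι) :=
  {σ | σ ⊆ V ∧ ∀ e ∈ C, ¬ e ⊆ σ}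

/-- The minimal members of a family of finite sets. -/
def minimalSets (S : Set (Finset ι)) : Set (Finset ι) :=
  {e | e ∈ S ∧ ∀ f ∈ S, f ⊆ e → f = e}

/-- Deletion of a vertex from a clutter: keep the circuits avoiding `v`. -/
def clDel (C : Set (Finset ι)) (v : ι) : Set (Finset ι) :=
  {e | e ∈ C ∧ v ∉ e}

/-- Contraction of a vertex in a clutter: minimal sets among `{e \ {v}}`. -/
def clCon (C : Set (Finset ι)) (v : ι) : Set (Finset ι) :=
  minimalSets ((fun e => e.erase v) '' C)

/-- A simplicial complex: a family of finite sets closed under taking subsets. -/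
def IsComplex (Δ : Set (Finset ι)) : Prop :=
  ∀ σ ∈ Δ, ∀ τ, τ ⊆ σ → τ ∈ Δ

/-- The link of a face `σ`. -/
def link (Δ : Set (Finset ι)) (σ : Finset ι) : Set (Finset ι) :=
  {τ | Disjoint τ σ ∧ τ ∪ σ ∈ Δ}

/-- The face-deletion `Δ \ σ`: faces of `Δ` not containing `σ`. -/
def delFace (Δ : Set (Finset ι)) (σ : Finset ι) : Set (Finset ι) :=
  {τ | τ ∈ Δ ∧ ¬ σ ⊆ τ}

/-- The star of a face `σ`, as a subcomplex. -/
def starC (Δ : Set (Finset ι)) (σ : Finset ι) : Set (Finset ι) :=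
  {τ | τ ∈ Δ ∧ τ ∪ σ ∈ Δ}

/-- A facet: a maximal face. -/
def IsFacet (Δ : Set (Finset ι)) (σ : Finset ι) : Prop :=
  σ ∈ Δ ∧ ∀ τ ∈ Δ, σ ⊆ τ → σ = τ

/-- A shedding face: every face `τ` of the star of `σ` satisfies the exchange property:
for every `v ∈ σ` there is `w ∉ τ` with `(τ ∪ {w}) \ {v}` a face. -/
def SheddingFace (Δ : Set (Finset ι)) (σ : Finset ι) : Prop :=
  ∀ τ ∈ Δ, σ ⊆ τ → ∀ v ∈ σ, ∃ w, w ∉ τ ∧ (insert w τ).erase v ∈ Δ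

/-- Shellability (Björner–Wachs form): an ordering `f 0, f 1, …` of the facets such
that for all `i < j` there are `k < j` and `x ∈ f j` with
`f i ∩ f j ⊆ f k ∩ f j = f j \ {x}`. -/
def Shellable (Δ : Set (Finset ι)) : Prop :=
  ∃ (m : ℕ) (f : Fin m → Finset ι),
    Function.Injective f ∧
    (∀ σ, IsFacet Δ σ ↔ ∃ i, f i = σ) ∧
    ∀ i j : Fin m, i < j →
      ∃ k, k < j ∧ ∃ x ∈ f j, f i ∩ f j ⊆ f k ∩ f j ∧ f k ∩ f j = (f j).erase x

/-- `k`-decomposability (for possibly non-pure complexes): a complex is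
`k`-decomposable if it is a simplex (or degenerate), or has a shedding face of
dimension at most `k` whose deletion and link are both `k`-decomposable. -/
inductive KDecomposable : ℤ → Set (Finset ι) → Prop
  | of_empty (k : ℤ) : KDecomposable k ∅
  | of_simplex (k : ℤ) (σ : Finset ι) : KDecomposable k {τ | τ ⊆ σ}
  | of_shed (k : ℤ) (Δ : Set (Finset ι)) (σ : Finset ι) (hσ : σ ∈ Δ)
      (hne : σ.Nonempty) (hdim : (σ.card : ℤ) ≤ k + 1)
      (hshed : SheddingFace Δ σ)
      (h₁ : KDecomposable k (delFace Δ σ)) (h₂ : KDecomposable k (link Δ σ)) :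
      KDecomposable k Δ

/-- A simplicial vertex of a clutter: any two distinct circuits `e₁, e₂` containing `v`
admit a third circuit `e₃ ⊆ (e₁ ∪ e₂) \ {v}`. -/
def SimplicialVertex (C : Set (Finset ι)) (v : ι) : Prop :=
  ∀ e₁ ∈ C, ∀ e₂ ∈ C, e₁ ≠ e₂ → v ∈ e₁ → v ∈ e₂ →
    ∃ e₃ ∈ C, e₃ ⊆ (e₁ ∪ e₂).erase v

/-- Minors of a clutter (with ground set): obtained by repeated deletions and contractions. -/
inductive Minor : Finset ι → Set (Finset ι) → Finset ι → Set (Finset ι) → Prop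
  | refl (V : Finset ι) (C : Set (Finset ι)) : Minor V C V C
  | del {V C W D} (v : ι) (hv : v ∈ W) (h : Minor V C W D) :
      Minor V C (W.erase v) (clDel D v)
  | con {V C W D} (v : ι) (hv : v ∈ W) (h : Minor V C W D) :
      Minor V C (W.erase v) (clCon D v)

/-- Contractions of a clutter (with ground set): obtained by repeated contractions. -/
inductive ConMinor : Finset ι → Set (Finset ι) → Finset ι → Set (Finset ι) → Prop
  | refl (V : Finset ι) (C : Set (Finset ι)) : ConMinor V C V C
  | con {V C W D} (v : ι) (hv : v ∈ W) (h : ConMinor V C W D) :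
      ConMinor V C (W.erase v) (clCon D v)

/-- A clutter is chordal if every minor with at least one vertex has a simplicial vertex. -/
def Chordal (V : Finset ι) (C : Set (Finset ι)) : Prop :=
  ∀ W D, Minor V C W D → W.Nonempty → ∃ v ∈ W, SimplicialVertex D v

/-- Clutter of minimal non-faces of a complex `Δ` on ground set `V`. -/
def nonfaceClutter (V : Finset ι) (Δ : Set (Finset ι)) : Set (Finset ι) :=
  {e | e ⊆ V ∧ e ∉ Δ ∧ ∀ e', e' ⊂ e → e' ∈ Δ}

/-- `cNon V C d`: the `d`-non-circuits of `C`, i.e. the `d`-subsets of `V`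
that are not circuits of `C`. -/
def cNon (V : Finset ι) (C : Set (Finset ι)) (d : ℕ) : Set (Finset ι) :=
  {e | e ⊆ V ∧ e.card = d ∧ e ∉ C}

/-- Combinatorial Alexander dual of a complex on ground set `V`. -/
def alexDual (V : Finset ι) (Δ : Set (Finset ι)) : Set (Finset ι) :=
  {σ | σ ⊆ V ∧ V \ σ ∉ Δ}

/-- Join of two complexes. -/
def joinC (Δ₁ Δ₂ : Set (Finset ι)) : Set (Finset ι) :=
  {σ | ∃ σ₁ ∈ Δ₁, ∃ σ₂ ∈ Δ₂, σ = σ₁ ∪ σ₂}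

/-- `σ` is a shedding face iff no facet of `(star_Δ σ) \ σ`
is a facet of `Δ \ σ`. -/
theorem stmt4 [Fintype ι] (Δ : Set (Finset ι)) (hΔ : IsComplex Δ)
    (σ : Finset ι) (hσ : σ ∈ Δ) :
    SheddingFace Δ σ ↔
      ∀ τ, IsFacet (delFace (starC Δ σ) σ) τ → ¬ IsFacet (delFace Δ σ) τ := by
  constructor
  · intro hshed τ hτfac hfac
    obtain ⟨⟨⟨hτΔ, hτuσ⟩, hτns⟩, _⟩ := hτfac
    obtain ⟨v, hvσ, hvτ⟩ := Finset.not_subset.mp hτns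
    obtain ⟨w, hwρ, hwΔ⟩ := hshed (τ ∪ σ) hτuσ Finset.subset_union_right v hvσ
    set τ' := (insert w (τ ∪ σ)).erase v with hτ'def
    have hvw : v ≠ w := by rintro rfl; exact hwρ (Finset.mem_union_right _ hvσ)
    have hτ'ns : ¬ σ ⊆ τ' := fun h => (Finset.notMem_erase v _) (h hvσ)
    have hττ' : τ ⊆ τ' := by
      intro x hx
      exact Finset.mem_erase.mpr ⟨fun hxv => hvτ (hxv ▸ hx),
        Finset.mem_insert_of_mem (Finset.mem_union_left _ hx)⟩
    have hwτ' : w ∈ τ' := Finset.mem_erase.mpr ⟨fun h => hvw h.symm,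
      Finset.mem_insert_self _ _⟩
    have hne : τ ≠ τ' := by
      intro h
      exact hwρ (Finset.mem_union_left _ (h ▸ hwτ'))
    exact hne (hfac.2 τ' ⟨hwΔ, hτ'ns⟩ hττ')
  · intro h τ hτΔ hστ v hvσ
    set η := τ.erase v with hηdef
    have hηΔ : η ∈ Δ := hΔ τ hτΔ _ (Finset.erase_subset _ _)
    have hηuσ : η ∪ σ = τ := by
      apply Finset.Subset.antisymm
      · exact Finset.union_subset (Finset.erase_subset _ _) hστ
      · intro x hx
        by_cases hxv : x = v
        · exact Finset.mem_union_right _ (hxv ▸ hvσ)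
        · exact Finset.mem_union_left _ (Finset.mem_erase.mpr ⟨hxv, hx⟩)
    have hη : η ∈ delFace (starC Δ σ) σ :=
      ⟨⟨hηΔ, by rw [hηuσ]; exact hτΔ⟩, fun hs => Finset.notMem_erase v τ (hs hvσ)⟩
    have hfin : {m | m ∈ delFace (starC Δ σ) σ ∧ η ⊆ m}.Finite := Set.toFinite _
    obtain ⟨τ₀, hτ₀, hmax⟩ :=
      hfin.exists_maximalFor Finset.card _ ⟨η, hη, subset_rfl⟩
    have hfacet : IsFacet (delFace (starC Δ σ) σ) τ₀ := by
      refine ⟨hτ₀.1, fun τ' hτ' hsub => ?_⟩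
      have hc := hmax (j := τ') ⟨hτ', hτ₀.2.trans hsub⟩ (Finset.card_le_card hsub)
      exact Finset.eq_of_subset_of_card_le hsub hc
    have hτ₀del : τ₀ ∈ delFace Δ σ := ⟨hτ₀.1.1.1, hτ₀.1.2⟩
    have hnm : ¬ ∀ τ' ∈ delFace Δ σ, τ₀ ⊆ τ' → τ₀ = τ' :=
      fun hh => h τ₀ hfacet ⟨hτ₀del, hh⟩
    push_neg at hnm
    obtain ⟨τ', hτ'del, hsub, hne⟩ := hnm
    obtain ⟨w, hwτ', hwτ₀⟩ := Finset.exists_of_ssubset (hsub.ssubset_of_ne hne)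
    have hσv : σ.erase v ⊆ τ₀ := (Finset.erase_subset_erase v hστ).trans hτ₀.2
    have hwv : w ≠ v := by
      rintro rfl
      refine hτ'del.2 (fun x hx => ?_)
      by_cases hxv : x = w
      · exact hxv ▸ hwτ'
      · exact hsub (hσv (Finset.mem_erase.mpr ⟨hxv, hx⟩))
    refine ⟨w, fun hwτ => hwτ₀ (hτ₀.2 (Finset.mem_erase.mpr ⟨hwv, hwτ⟩)), ?_⟩
    apply hΔ τ' hτ'del.1
    intro x hx
    obtain ⟨hxv, hx⟩ := Finset.mem_erase.mp hx
    rcases Finset.mem_insert.mp hx with rfl | hxτ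
    · exact hwτ'
    · exact hsub (hτ₀.2 (Finset.mem_erase.mpr ⟨hxv, hxτ⟩))
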